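/- Let q ≥ 2, n ≥ 1, P ≥ 1, and let a ∈ (ZMod q)^n be nonzero. Draw d_1, …, d_P independently and uniformly at random from (ZMod q)^n (uniform measure on the finite set ((ZMod q)^n)^P). Then for every μ₀ > 0, ℙ( | Σ_{p=1}^P ω^{⟨d_p, a⟩} | ≥ P·μ₀ ) ≤ 4·exp( −μ₀²·P / 8 ). -/

import Mathlib

open Finset

section Character

variable {q : ℕ} [NeZero q]

lemma chi_add (ω : ℂ) (hωq : ω ^ q = 1) (b c : ZMod q) :
    ω ^ (b + c).val = ω ^ b.val * ω ^ c.val := by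
  rw [← pow_add]
  have h : (b + c).val = (b.val + c.val) % q := ZMod.val_add b c
  conv_rhs => rw [← Nat.div_add_mod (b.val + c.val) q]
  rw [h, pow_add, pow_mul, hωq, one_pow, one_mul]

lemma chi_sum (ω : ℂ) (hωq : ω ^ q = 1) {ι : Type*} (s : Finset ι) (f : ι → ZMod q) :
    ω ^ (∑ i ∈ s, f i).val = ∏ i ∈ s, ω ^ (f i).val := by
  induction s using Finset.cons_induction with
  | empty => simp [ZMod.val_zero]
  | cons i s hi ih => rw [Finset.sum_cons, Finset.prod_cons, chi_add ω hωq, ih]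

lemma chi_ne_one (ω : ℂ) (hω : IsPrimitiveRoot ω q) {c : ZMod q} (hc : c ≠ 0) :
    ω ^ c.val ≠ 1 := by
  intro h
  have hdvd : q ∣ c.val := (IsPrimitiveRoot.pow_eq_one_iff_dvd hω c.val).mp h
  have hlt : c.val < q := ZMod.val_lt c
  have h0 : c.val = 0 := Nat.eq_zero_of_dvd_of_lt hdvd hlt
  exact hc (by rwa [← ZMod.val_eq_zero])

lemma sum_chi_mul_eq_zero (ω : ℂ) (hω : IsPrimitiveRoot ω q) {c : ZMod q} (hc : c ≠ 0) :
    ∑ x : ZMod q, ω ^ (x * c).val = 0 := by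
  have hωq : ω ^ q = 1 := hω.pow_eq_one
  have key : (ω ^ c.val) * ∑ x : ZMod q, ω ^ (x * c).val
      = ∑ x : ZMod q, ω ^ (x * c).val := by
    rw [Finset.mul_sum]
    refine Fintype.sum_equiv (Equiv.addRight (1 : ZMod q)) _ _ (fun x => ?_)
    have : (x + 1) * c = x * c + c := by ring
    simp only [Equiv.coe_addRight, this, chi_add ω hωq]
    ring
  have h1 : (ω ^ c.val - 1) * ∑ x : ZMod q, ω ^ (x * c).val = 0 := by
    rw [sub_mul, one_mul, key, sub_self]
  rcases mul_eq_zero.mp h1 with h | h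
  · exact absurd (sub_eq_zero.mp h) (chi_ne_one ω hω hc)
  · exact h

end Character

section MeanZero

variable {q : ℕ} [NeZero q]

lemma sum_chi_inner_eq_zero {n : ℕ} (ω : ℂ) (hω : IsPrimitiveRoot ω q)
    (a : Fin n → ZMod q) (ha : a ≠ 0) :
    ∑ v : Fin n → ZMod q, ω ^ (∑ i, v i * a i).val = 0 := by
  have hωq : ω ^ q = 1 := hω.pow_eq_one
  have hstep : ∀ v : Fin n → ZMod q,
      ω ^ (∑ i, v i * a i).val = ∏ i, ω ^ (v i * a i).val := fun v =>
    chi_sum ω hωq Finset.univ (fun i => v i * a i)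
  simp_rw [hstep]
  rw [← Fintype.prod_sum (fun i (x : ZMod q) => ω ^ (x * a i).val)]
  obtain ⟨i0, hi0⟩ : ∃ i, a i ≠ 0 := by
    by_contra hcon
    push_neg at hcon
    exact ha (funext hcon)
  exact Finset.prod_eq_zero (Finset.mem_univ i0) (sum_chi_mul_eq_zero ω hω hi0)

end MeanZero

section Chernoff

lemma exp_mul_le_cosh_add {l g : ℝ} (hg : |g| ≤ 1) :
    Real.exp (l * g) ≤ Real.cosh l + g * Real.sinh l := by
  obtain ⟨hg1, hg2⟩ := abs_le.mp hg
  have h := convexOn_exp.2 (Set.mem_univ (-l)) (Set.mem_univ l)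
    (by linarith : (0:ℝ) ≤ (1 - g)/2) (by linarith : (0:ℝ) ≤ (1 + g)/2) (by ring)
  simp only [smul_eq_mul] at h
  have he : (1 - g)/2 * (-l) + (1 + g)/2 * l = l * g := by ring
  rw [he] at h
  calc Real.exp (l * g) ≤ (1 - g)/2 * Real.exp (-l) + (1 + g)/2 * Real.exp l := h
    _ = Real.cosh l + g * Real.sinh l := by
        rw [Real.cosh_eq, Real.sinh_eq]; ring

lemma chernoff_count {α : Type*} [Fintype α] [DecidableEq α] (G : α → ℝ)
    (hb : ∀ x, |G x| ≤ 1) (hmean : ∑ x : α, G x = 0) (P : ℕ) (μ₀ : ℝ) (hμ₀ : 0 < μ₀)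
    (pred : (Fin P → α) → Prop) [DecidablePred pred]
    (hpred : ∀ d, pred d → (P : ℝ) * μ₀ / 2 ≤ ∑ p, G (d p)) :
    ((Finset.univ.filter pred).card : ℝ)
      ≤ Real.exp (-(μ₀ ^ 2) * P / 8) * ((Fintype.card α : ℝ)) ^ P := by
  set l : ℝ := μ₀ / 2 with hl
  set t : ℝ := (P : ℝ) * μ₀ / 2 with ht
  have hN0 : (0:ℝ) ≤ (Fintype.card α : ℝ) := Nat.cast_nonneg _
  -- step 1 : card * exp (l*t) ≤ ∑ exp (l * S d)
  have h1 : ((Finset.univ.filter pred).card : ℝ) * Real.exp (l * t)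
      ≤ ∑ d : Fin P → α, Real.exp (l * ∑ p, G (d p)) := by
    have hl0 : (0:ℝ) ≤ l := by positivity
    calc ((Finset.univ.filter pred).card : ℝ) * Real.exp (l * t)
        = ∑ _d ∈ Finset.univ.filter pred, Real.exp (l * t) := by
          rw [Finset.sum_const, nsmul_eq_mul]
      _ ≤ ∑ d ∈ Finset.univ.filter pred, Real.exp (l * ∑ p, G (d p)) := by
          refine Finset.sum_le_sum (fun d hd => ?_)
          refine Real.exp_le_exp.mpr (mul_le_mul_of_nonneg_left ?_ hl0)
          exact hpred d (Finset.mem_filter.mp hd).2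
      _ ≤ ∑ d : Fin P → α, Real.exp (l * ∑ p, G (d p)) :=
          Finset.sum_le_sum_of_subset_of_nonneg (Finset.filter_subset _ _)
            (fun _ _ _ => (Real.exp_pos _).le)
  -- step 2 : factorization
  have h2 : ∑ d : Fin P → α, Real.exp (l * ∑ p, G (d p))
      = (∑ x : α, Real.exp (l * G x)) ^ P := by
    rw [Fintype.sum_pow (fun x => Real.exp (l * G x)) P]
    refine Finset.sum_congr rfl (fun d _ => ?_)
    rw [Finset.mul_sum, Real.exp_sum]
  -- step 3 : per-coordinate mgf bound
  have h3 : ∑ x : α, Real.exp (l * G x)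
      ≤ (Fintype.card α : ℝ) * Real.exp (l ^ 2 / 2) := by
    calc ∑ x : α, Real.exp (l * G x)
        ≤ ∑ x : α, (Real.cosh l + G x * Real.sinh l) :=
          Finset.sum_le_sum (fun x _ => exp_mul_le_cosh_add (hb x))
      _ = (Fintype.card α : ℝ) * Real.cosh l + (∑ x : α, G x) * Real.sinh l := by
          rw [Finset.sum_add_distrib, Finset.sum_const, nsmul_eq_mul, ← Finset.sum_mul,
            Finset.card_univ]
      _ = (Fintype.card α : ℝ) * Real.cosh l := by rw [hmean]; ring
      _ ≤ (Fintype.card α : ℝ) * Real.exp (l ^ 2 / 2) :=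
          mul_le_mul_of_nonneg_left (Real.cosh_le_exp_half_sq l) hN0
  -- combine
  have hEpos : (0:ℝ) < Real.exp (l * t) := Real.exp_pos _
  have h4 : (∑ x : α, Real.exp (l * G x)) ^ P
      ≤ ((Fintype.card α : ℝ) * Real.exp (l ^ 2 / 2)) ^ P := by
    refine pow_le_pow_left₀ ?_ h3 P
    exact Finset.sum_nonneg (fun x _ => (Real.exp_pos _).le)
  have h5 : ((Finset.univ.filter pred).card : ℝ)
      ≤ ((Fintype.card α : ℝ) * Real.exp (l ^ 2 / 2)) ^ P * Real.exp (-(l * t)) := by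
    rw [Real.exp_neg, ← div_eq_mul_inv, le_div_iff₀ hEpos]
    exact le_trans (h2 ▸ h1) h4
  calc ((Finset.univ.filter pred).card : ℝ)
      ≤ ((Fintype.card α : ℝ) * Real.exp (l ^ 2 / 2)) ^ P * Real.exp (-(l * t)) := h5
    _ = Real.exp (-(μ₀ ^ 2) * P / 8) * ((Fintype.card α : ℝ)) ^ P := by
        rw [mul_pow, ← Real.exp_nat_mul, mul_assoc, ← Real.exp_add,
          mul_comm (((Fintype.card α : ℝ)) ^ P)]
        congr 1
        rw [hl, ht]
        push_cast
        ring

end Chernoff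

open scoped Classical in
/-- For nonzero `a ∈ (ZMod q)^n` and `d_1, …, d_P` drawn independently
and uniformly at random from `(ZMod q)^n`, for every `μ₀ > 0`,
`ℙ(|Σ_p ω^⟨d_p, a⟩| ≥ P·μ₀) ≤ 4·exp(−μ₀²·P/8)`. -/
theorem random_offset_sum_tail
    (q n P : ℕ) [NeZero q] (hq : 2 ≤ q) (hn : 1 ≤ n) (hP : 1 ≤ P)
    (ω : ℂ) (hω : ω = Complex.exp (2 * (Real.pi : ℂ) * Complex.I / (q : ℂ)))
    (a : Fin n → ZMod q) (ha : a ≠ 0) (μ₀ : ℝ) (hμ₀ : 0 < μ₀) :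
    ((Finset.univ.filter (fun d : Fin P → Fin n → ZMod q =>
        (P : ℝ) * μ₀ ≤ ‖∑ p, ω ^ (∑ i, d p i * a i).val‖)).card : ℝ) /
      (Fintype.card (Fin P → Fin n → ZMod q) : ℝ)
      ≤ 4 * Real.exp (-(μ₀ ^ 2) * P / 8) := by
  classical
  have hq0 : q ≠ 0 := NeZero.ne q
  have hprim : IsPrimitiveRoot ω q := by
    rw [hω]; exact Complex.isPrimitiveRoot_exp q hq0
  have hωq : ω ^ q = 1 := hprim.pow_eq_one
  set χ : (Fin n → ZMod q) → ℂ := fun v => ω ^ (∑ i, v i * a i).val with hχ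
  -- |χ v| = 1
  have habsω : ‖ω‖ = 1 := by
    have h := congrArg norm hωq
    rw [norm_pow, norm_one] at h
    have h1 : ‖ω‖ ^ q = (1:ℝ) ^ q := by rw [h, one_pow]
    exact (pow_left_strictMonoOn₀ hq0).injOn (norm_nonneg ω)
      (by norm_num : (1:ℝ) ∈ {a : ℝ | 0 ≤ a}) h1
  have habs : ∀ v, ‖χ v‖ = 1 := fun v => by
    rw [hχ]; simp [norm_pow, habsω]
  have hre_bd : ∀ v, |(χ v).re| ≤ 1 := fun v =>
    (habs v) ▸ Complex.abs_re_le_norm (χ v)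
  have him_bd : ∀ v, |(χ v).im| ≤ 1 := fun v =>
    (habs v) ▸ Complex.abs_im_le_norm (χ v)
  have hmean : ∑ v : Fin n → ZMod q, χ v = 0 := sum_chi_inner_eq_zero ω hprim a ha
  have hre_mean : ∑ v : Fin n → ZMod q, (χ v).re = 0 := by
    rw [← Complex.re_sum, hmean, Complex.zero_re]
  have him_mean : ∑ v : Fin n → ZMod q, (χ v).im = 0 := by
    rw [← Complex.im_sum, hmean, Complex.zero_im]
  set t : ℝ := (P : ℝ) * μ₀ / 2 with ht
  set B : ℝ := Real.exp (-(μ₀ ^ 2) * P / 8) * ((Fintype.card (Fin n → ZMod q) : ℝ)) ^ P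
    with hB
  -- four tail sets
  set F1 := Finset.univ.filter (fun d : Fin P → Fin n → ZMod q => t ≤ ∑ p, (χ (d p)).re)
  set F2 := Finset.univ.filter (fun d : Fin P → Fin n → ZMod q => t ≤ ∑ p, -(χ (d p)).re)
  set F3 := Finset.univ.filter (fun d : Fin P → Fin n → ZMod q => t ≤ ∑ p, (χ (d p)).im)
  set F4 := Finset.univ.filter (fun d : Fin P → Fin n → ZMod q => t ≤ ∑ p, -(χ (d p)).im)
  have hc1 : (F1.card : ℝ) ≤ B :=
    chernoff_count (fun v => (χ v).re) hre_bd hre_mean P μ₀ hμ₀ _ (fun d hd => hd)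
  have hc2 : (F2.card : ℝ) ≤ B :=
    chernoff_count (fun v => -(χ v).re) (fun v => by simpa using hre_bd v)
      (by simpa [Finset.sum_neg_distrib] using neg_eq_zero.mpr hre_mean) P μ₀ hμ₀ _
      (fun d hd => hd)
  have hc3 : (F3.card : ℝ) ≤ B :=
    chernoff_count (fun v => (χ v).im) him_bd him_mean P μ₀ hμ₀ _ (fun d hd => hd)
  have hc4 : (F4.card : ℝ) ≤ B :=
    chernoff_count (fun v => -(χ v).im) (fun v => by simpa using him_bd v)
      (by simpa [Finset.sum_neg_distrib] using neg_eq_zero.mpr him_mean) P μ₀ hμ₀ _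
      (fun d hd => hd)
  -- union bound
  have hsub : (Finset.univ.filter (fun d : Fin P → Fin n → ZMod q =>
      (P : ℝ) * μ₀ ≤ ‖∑ p, ω ^ (∑ i, d p i * a i).val‖))
      ⊆ F1 ∪ F2 ∪ F3 ∪ F4 := by
    intro d hd
    have hd' : (P : ℝ) * μ₀ ≤ ‖∑ p, χ (d p)‖ := (Finset.mem_filter.mp hd).2
    set S : ℂ := ∑ p, χ (d p) with hS
    have hre : S.re = ∑ p, (χ (d p)).re := Complex.re_sum _ _
    have him : S.im = ∑ p, (χ (d p)).im := Complex.im_sum _ _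
    have habs' : (P : ℝ) * μ₀ ≤ |S.re| + |S.im| :=
      le_trans hd' (Complex.norm_le_abs_re_add_abs_im S)
    have hcases : t ≤ |S.re| ∨ t ≤ |S.im| := by
      by_contra hcon
      push_neg at hcon
      rw [ht] at hcon
      linarith [hcon.1, hcon.2]
    simp only [Finset.mem_union]
    rcases hcases with h | h
    · rcases le_abs.mp h with h' | h'
      · left; left; left
        simp only [F1, Finset.mem_filter, Finset.mem_univ, true_and]
        rw [← hre]; exact h'
      · left; left; right
        simp only [F2, Finset.mem_filter, Finset.mem_univ, true_and]
        rw [Finset.sum_neg_distrib, ← hre]; exact h'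
    · rcases le_abs.mp h with h' | h'
      · left; right
        simp only [F3, Finset.mem_filter, Finset.mem_univ, true_and]
        rw [← him]; exact h'
      · right
        simp only [F4, Finset.mem_filter, Finset.mem_univ, true_and]
        rw [Finset.sum_neg_distrib, ← him]; exact h'
  have hcard : ((Finset.univ.filter (fun d : Fin P → Fin n → ZMod q =>
      (P : ℝ) * μ₀ ≤ ‖∑ p, ω ^ (∑ i, d p i * a i).val‖)).card : ℝ)
      ≤ 4 * B := by
    have h1 : (Finset.univ.filter (fun d : Fin P → Fin n → ZMod q =>
        (P : ℝ) * μ₀ ≤ ‖∑ p, ω ^ (∑ i, d p i * a i).val‖)).card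
        ≤ F1.card + F2.card + F3.card + F4.card := by
      calc _ ≤ (F1 ∪ F2 ∪ F3 ∪ F4).card := Finset.card_le_card hsub
        _ ≤ (F1 ∪ F2 ∪ F3).card + F4.card := Finset.card_union_le _ _
        _ ≤ (F1 ∪ F2).card + F3.card + F4.card := by
            have := Finset.card_union_le (F1 ∪ F2) F3; omega
        _ ≤ F1.card + F2.card + F3.card + F4.card := by
            have := Finset.card_union_le F1 F2; omega
    calc ((Finset.univ.filter (fun d : Fin P → Fin n → ZMod q =>
          (P : ℝ) * μ₀ ≤ ‖∑ p, ω ^ (∑ i, d p i * a i).val‖)).card : ℝ)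
        ≤ (F1.card : ℝ) + F2.card + F3.card + F4.card := by exact_mod_cast h1
      _ ≤ 4 * B := by linarith
  -- conclude
  have hT : (Fintype.card (Fin P → Fin n → ZMod q) : ℝ)
      = ((Fintype.card (Fin n → ZMod q) : ℝ)) ^ P := by
    rw [Fintype.card_fun, Fintype.card_fin]
    push_cast
    ring
  have hTpos : (0:ℝ) < (Fintype.card (Fin P → Fin n → ZMod q) : ℝ) := by
    exact_mod_cast Fintype.card_pos
  rw [div_le_iff₀ hTpos, hT]
  calc ((Finset.univ.filter (fun d : Fin P → Fin n → ZMod q =>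
        (P : ℝ) * μ₀ ≤ ‖∑ p, ω ^ (∑ i, d p i * a i).val‖)).card : ℝ)
      ≤ 4 * B := hcard
    _ = 4 * Real.exp (-(μ₀ ^ 2) * P / 8) * ((Fintype.card (Fin n → ZMod q) : ℝ)) ^ P := by
        rw [hB]; ring
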